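/- Let θ* ∈ ℝ^K with θ*_k = ln(μ_k/ν_k). For every T > 0, every r ∈ ℝ_+^K, and every Lipschitz function q : [0,T] → ℝ_+^K with q(0) = 0 and q(T) = r, one has ∫_0^T L(q(t), q'(t)) dt ≥ θ* · r, where q' is the almost-everywhere defined derivative of q and the integral is taken in [0, +∞] (note L ≥ 0 since L_J(y) ≥ 0 for all y). -/

import Mathlib

open Matrix MeasureTheory

open Filter Set intervalIntegral
open scoped Topology
open scoped Classical

section AuxLemmas

lemma sub_zero_lemma {n : ℕ} (P : Matrix (Fin (n+1)) (Fin (n+1)) ℝ)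
    (lam ν : Fin (n+1) → ℝ) (hlam : ∀ k, 0 < lam k) (hν : ∀ k, 0 < ν k)
    (hbal : ∀ l, ν l = lam l + ∑ k, P k l * ν k)
    (z : Fin (n+1) → ℝ) (hz : ∀ k, 0 ≤ z k)
    (hsub : ∀ k, z k ≤ ∑ l, P k l * z l) :
    ∀ k, z k = 0 := by
  have key : ∑ k, ν k * z k ≤ ∑ k, ν k * ∑ l, P k l * z l :=
    Finset.sum_le_sum fun k _ => mul_le_mul_of_nonneg_left (hsub k) (hν k).le
  have swap : ∑ k, ν k * ∑ l, P k l * z l = ∑ l, (ν l - lam l) * z l := by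
    have h1 : ∀ k, ν k * ∑ l, P k l * z l = ∑ l, ν k * (P k l * z l) := fun k =>
      Finset.mul_sum _ _ _
    rw [Finset.sum_congr rfl fun k _ => h1 k, Finset.sum_comm]
    refine Finset.sum_congr rfl fun l _ => ?_
    have h2 : ∑ k, ν k * (P k l * z l) = (∑ k, P k l * ν k) * z l := by
      rw [Finset.sum_mul]; exact Finset.sum_congr rfl fun k _ => by ring
    rw [h2]
    have := hbal l
    have h3 : (∑ k, P k l * ν k) = ν l - lam l := by linarith
    rw [h3]
  rw [swap] at key
  have hsum : ∑ l, lam l * z l ≤ 0 := by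
    have h4 : ∑ l, (ν l - lam l) * z l = ∑ l, ν l * z l - ∑ l, lam l * z l := by
      rw [← Finset.sum_sub_distrib]
      exact Finset.sum_congr rfl fun l _ => by ring
    rw [h4] at key; linarith
  have hsum0 : ∑ l, lam l * z l = 0 :=
    le_antisymm hsum (Finset.sum_nonneg fun l _ => mul_nonneg (hlam l).le (hz l))
  intro k
  have := (Finset.sum_eq_zero_iff_of_nonneg
    (fun l _ => mul_nonneg (hlam l).le (hz l))).1 hsum0 k (Finset.mem_univ k)
  have hk := hlam k
  nlinarith

lemma exists_beta {n : ℕ} (P : Matrix (Fin (n+1)) (Fin (n+1)) ℝ)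
    (hP : ∀ k l, 0 ≤ P k l) (hProw : ∀ k, ∑ l, P k l ≤ 1)
    (lam ν mu : Fin (n+1) → ℝ) (hlam : ∀ k, 0 < lam k) (hν : ∀ k, 0 < ν k)
    (hmu : ∀ k, 0 < mu k)
    (hbal : ∀ l, ν l = lam l + ∑ k, P k l * ν k) (J : Finset (Fin (n+1))) :
    ∃ β : Fin (n+1) → ℝ, (∀ k, -1 < β k) ∧ (∀ k ∉ J, β k = mu k / ν k - 1) ∧
      (∀ k ∈ J, β k = ∑ l, P k l * β l) := by
  set Q : Matrix (Fin (n+1)) (Fin (n+1)) ℝ :=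
    (fun k l => if k ∈ J ∧ l ∈ J then P k l else 0 : Matrix _ _ ℝ) with hQdef
  have hQval : ∀ k l, Q k l = if k ∈ J ∧ l ∈ J then P k l else 0 := fun k l => rfl
  have hQ0 : ∀ k l, 0 ≤ Q k l := by
    intro k l; rw [hQval]
    by_cases h : k ∈ J ∧ l ∈ J
    · simpa [h] using hP k l
    · simp [h]
  have hQP : ∀ k l, Q k l ≤ P k l := by
    intro k l; rw [hQval]
    by_cases h : k ∈ J ∧ l ∈ J
    · simp [h]
    · simpa [h] using hP k l
  -- injectivity of (1 - Q) * ·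
  have hker : ∀ w : Fin (n+1) → ℝ, (1 - Q) *ᵥ w = 0 → w = 0 := by
    intro w h0
    have hfix : w = Q *ᵥ w := by
      have h1 : w - Q *ᵥ w = 0 := by
        calc w - Q *ᵥ w = (1 : Matrix (Fin (n+1)) (Fin (n+1)) ℝ) *ᵥ w - Q *ᵥ w := by
              rw [Matrix.one_mulVec]
          _ = (1 - Q) *ᵥ w := (Matrix.sub_mulVec _ _ _).symm
          _ = 0 := h0
      exact (sub_eq_zero.mp h1)
    have habs : ∀ k, |w k| = 0 := by
      refine sub_zero_lemma P lam ν hlam hν hbal (fun k => |w k|)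
        (fun k => abs_nonneg _) (fun k => ?_)
      have h2 : w k = ∑ l, Q k l * w l := by
        conv_lhs => rw [hfix]
        rfl
      calc |w k| = |∑ l, Q k l * w l| := by rw [h2]
        _ ≤ ∑ l, |Q k l * w l| := Finset.abs_sum_le_sum_abs _ _
        _ ≤ ∑ l, P k l * |w l| := by
            refine Finset.sum_le_sum fun l _ => ?_
            rw [abs_mul, abs_of_nonneg (hQ0 k l)]
            exact mul_le_mul_of_nonneg_right (hQP k l) (abs_nonneg _)
    funext k
    exact abs_eq_zero.mp (habs k)
  have hinj : Function.Injective ((1 - Q).mulVecLin) := by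
    intro x y hxy
    have h0 : (1 - Q) *ᵥ (x - y) = 0 := by
      rw [Matrix.mulVec_sub]
      have : (1 - Q) *ᵥ x = (1 - Q) *ᵥ y := hxy
      rw [this, sub_self]
    have := hker _ h0
    exact sub_eq_zero.mp this
  have hsurj : Function.Surjective ((1 - Q).mulVecLin) :=
    (LinearMap.injective_iff_surjective).1 hinj
  set d : Fin (n+1) → ℝ := fun k =>
    if k ∈ J then ∑ l, (if l ∈ J then (0:ℝ) else P k l * (mu l / ν l - 1))
    else mu k / ν k - 1 with hddef
  obtain ⟨β, hβeq⟩ := hsurj d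
  have hβeq' : β - Q *ᵥ β = d := by
    have : (1 - Q) *ᵥ β = d := hβeq
    rw [Matrix.sub_mulVec, Matrix.one_mulVec] at this
    exact this
  have hfix : ∀ k, β k = (∑ l, Q k l * β l) + d k := by
    intro k
    have := congrFun hβeq' k
    simp only [Pi.sub_apply] at this
    have h2 : (Q *ᵥ β) k = ∑ l, Q k l * β l := rfl
    linarith [this, h2 ▸ this]
  have hoff : ∀ k ∉ J, β k = mu k / ν k - 1 := by
    intro k hk
    have h1 : (∑ l, Q k l * β l) = 0 := by
      refine Finset.sum_eq_zero fun l _ => ?_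
      rw [hQval]
      simp [hk]
    rw [hfix k, h1, hddef]
    simp [hk]
  have hin : ∀ k ∈ J, β k = ∑ l, P k l * β l := by
    intro k hk
    rw [hfix k]
    have hd : d k = ∑ l, (if l ∈ J then (0:ℝ) else P k l * (mu l / ν l - 1)) := by
      rw [hddef]; simp [hk]
    rw [hd, ← Finset.sum_add_distrib]
    refine Finset.sum_congr rfl fun l _ => ?_
    by_cases hl : l ∈ J
    · rw [hQval]; simp [hk, hl]
    · rw [hQval]
      simp only [hk, hl, and_false, if_false, if_true, true_and]
      rw [hoff l hl]
      ring
  -- positivity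
  have hJne : (Finset.univ : Finset (Fin (n+1))).Nonempty := Finset.univ_nonempty
  set c : ℝ := (Finset.univ.sup' hJne (fun k => 1 - mu k / ν k)) ⊔ 0 with hcdef
  have hc0 : 0 ≤ c := le_max_right _ _
  have hc1 : c < 1 := by
    refine max_lt ?_ one_pos
    refine (Finset.sup'_lt_iff hJne).2 fun k _ => ?_
    have : 0 < mu k / ν k := div_pos (hmu k) (hν k)
    linarith
  have hcb : ∀ k, -c ≤ mu k / ν k - 1 := by
    intro k
    have h1 : 1 - mu k / ν k ≤ c :=
      le_trans (Finset.le_sup' (fun k => 1 - mu k / ν k) (Finset.mem_univ k)) (le_max_left _ _)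
    linarith
  have hzlem : ∀ k, max (-β k - c) 0 = 0 := by
    refine sub_zero_lemma P lam ν hlam hν hbal _ (fun k => le_max_right _ _)
      (fun k => ?_)
    have hsnn : (0:ℝ) ≤ ∑ l, P k l * max (-β l - c) 0 :=
      Finset.sum_nonneg fun l _ => mul_nonneg (hP k l) (le_max_right _ _)
    by_cases hk : k ∈ J
    · refine max_le ?_ hsnn
      have h1 : ∑ l, P k l * (-β l - c) ≤ ∑ l, P k l * max (-β l - c) 0 :=
        Finset.sum_le_sum fun l _ =>
          mul_le_mul_of_nonneg_left (le_max_left _ _) (hP k l)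
      have h2 : ∑ l, P k l * (-β l - c) = -(∑ l, P k l * β l) - c * ∑ l, P k l := by
        rw [← Finset.sum_neg_distrib, Finset.mul_sum, ← Finset.sum_sub_distrib]
        exact Finset.sum_congr rfl fun l _ => by ring
      have h3 : c * ∑ l, P k l ≤ c := by
        calc c * ∑ l, P k l ≤ c * 1 := mul_le_mul_of_nonneg_left (hProw k) hc0
          _ = c := mul_one c
      have h4 := hin k hk
      linarith
    · have h5 : -β k - c ≤ 0 := by
        have := hcb k
        rw [hoff k hk]
        linarith
      rw [max_eq_right h5]
      exact hsnn
  refine ⟨β, fun k => ?_, hoff, hin⟩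
  have := hzlem k
  have h6 : -β k - c ≤ 0 := by
    by_contra h
    push_neg at h
    rw [max_eq_left h.le] at this
    linarith
  linarith

lemma HJ_zero {n : ℕ} (P : Matrix (Fin (n+1)) (Fin (n+1)) ℝ)
    (lam mu ν : Fin (n+1) → ℝ) (hmu : ∀ k, 0 < mu k) (hν : ∀ k, 0 < ν k)
    (hbal : ∀ l, ν l = lam l + ∑ k, P k l * ν k)
    (J : Finset (Fin (n+1))) (β : Fin (n+1) → ℝ) (hβ1 : ∀ k, -1 < β k)
    (hβ2 : ∀ k ∉ J, β k = mu k / ν k - 1)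
    (hβ3 : ∀ k ∈ J, β k = ∑ l, P k l * β l) :
    (∑ k, (Real.exp (Real.log (1 + β k)) - 1) * lam k
      + ∑ k ∈ J,
          max (Real.exp (-Real.log (1 + β k))
            * ((∑ l, (Real.exp (Real.log (1 + β l)) - 1) * P k l) + 1) - 1) 0 * mu k
      + ∑ k ∈ Jᶜ,
          (Real.exp (-Real.log (1 + β k))
            * ((∑ l, (Real.exp (Real.log (1 + β l)) - 1) * P k l) + 1) - 1) * mu k) = 0 := by
  have hbpos : ∀ k, 0 < 1 + β k := fun k => by linarith [hβ1 k]
  have hexp : ∀ k, Real.exp (Real.log (1 + β k)) = 1 + β k := fun k =>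
    Real.exp_log (hbpos k)
  have hexpneg : ∀ k, Real.exp (-Real.log (1 + β k)) = (1 + β k)⁻¹ := fun k => by
    rw [Real.exp_neg, hexp k]
  set S : Fin (n+1) → ℝ := fun k => ∑ l, P k l * β l with hSdef
  have hS : ∀ k, (∑ l, (Real.exp (Real.log (1 + β l)) - 1) * P k l) = S k := by
    intro k
    refine Finset.sum_congr rfl fun l _ => ?_
    rw [hexp l]; ring
  -- first sum
  have h1 : ∑ k, (Real.exp (Real.log (1 + β k)) - 1) * lam k = ∑ k, β k * lam k := by
    refine Finset.sum_congr rfl fun k _ => ?_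
    rw [hexp k]; ring
  -- middle sum vanishes
  have h2 : ∑ k ∈ J,
      max (Real.exp (-Real.log (1 + β k))
        * ((∑ l, (Real.exp (Real.log (1 + β l)) - 1) * P k l) + 1) - 1) 0 * mu k = 0 := by
    refine Finset.sum_eq_zero fun k hk => ?_
    rw [hS k, hexpneg k]
    have hSk : S k = β k := (hβ3 k hk).symm
    rw [hSk]
    have : (1 + β k)⁻¹ * (β k + 1) - 1 = 0 := by
      rw [show β k + 1 = 1 + β k from by ring, inv_mul_cancel₀ (hbpos k).ne']
      ring
    rw [this]
    simp
  -- third sum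
  have h3 : ∑ k ∈ Jᶜ,
      (Real.exp (-Real.log (1 + β k))
        * ((∑ l, (Real.exp (Real.log (1 + β l)) - 1) * P k l) + 1) - 1) * mu k
      = ∑ k ∈ Jᶜ, (ν k * S k - ν k * β k) := by
    refine Finset.sum_congr rfl fun k hk => ?_
    have hkJ : k ∉ J := Finset.mem_compl.mp hk
    rw [hS k, hexpneg k]
    have hν0 : ν k ≠ 0 := (hν k).ne'
    have hb : 1 + β k = mu k / ν k := by rw [hβ2 k hkJ]; ring
    have hmuk : mu k = ν k * (1 + β k) := by
      rw [hb, mul_comm, div_mul_cancel₀ _ hν0]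
    rw [hb, inv_div, hmuk]
    have hb0 : (1 + β k) ≠ 0 := (hbpos k).ne'
    field_simp
    ring
  rw [h1, h2, h3]
  -- final algebra
  have hlamβ : ∑ k, β k * lam k = ∑ k, ν k * β k - ∑ k, ν k * S k := by
    have e1 : ∀ k, β k * lam k = ν k * β k - β k * ∑ j, P j k * ν j := by
      intro k
      linear_combination (-(β k)) * hbal k
    rw [Finset.sum_congr rfl fun k _ => e1 k, Finset.sum_sub_distrib]
    congr 1
    -- ∑ k, β k * ∑ j, P j k * ν j = ∑ j, ν j * S j
    have e2 : ∀ k, β k * ∑ j, P j k * ν j = ∑ j, β k * (P j k * ν j) := fun k =>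
      Finset.mul_sum _ _ _
    rw [Finset.sum_congr rfl fun k _ => e2 k, Finset.sum_comm]
    refine Finset.sum_congr rfl fun j _ => ?_
    rw [hSdef, Finset.mul_sum]
    exact Finset.sum_congr rfl fun k _ => by ring
  have hsplitS : ∑ k ∈ J, ν k * S k + ∑ k ∈ Jᶜ, ν k * S k = ∑ k, ν k * S k :=
    Finset.sum_add_sum_compl _ _
  have hsplitβ : ∑ k ∈ J, ν k * β k + ∑ k ∈ Jᶜ, ν k * β k = ∑ k, ν k * β k :=
    Finset.sum_add_sum_compl _ _
  have hJS : ∑ k ∈ J, ν k * S k = ∑ k ∈ J, ν k * β k :=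
    Finset.sum_congr rfl fun k hk => by
      simp only [hSdef]
      rw [← hβ3 k hk]
  have hsub : ∑ k ∈ Jᶜ, (ν k * S k - ν k * β k)
      = ∑ k ∈ Jᶜ, ν k * S k - ∑ k ∈ Jᶜ, ν k * β k := Finset.sum_sub_distrib _ _
  rw [hlamβ, hsub]
  linarith

lemma deriv_zero_on_zeros (f : ℝ → ℝ) (hf : Continuous f) :
    ∀ᵐ t ∂(volume : Measure ℝ), ∀ v : ℝ, HasDerivAt f v t → f t = 0 → v = 0 := by
  set A : Set ℝ := f ⁻¹' {0} with hAdef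
  have h1 := Besicovitch.ae_tendsto_measure_inter_div (volume : Measure ℝ) A
  have h2 := ae_imp_of_ae_restrict h1
  filter_upwards [h2] with t ht v hv hft
  have htA : t ∈ A := by simp [hAdef, hft]
  have hd := ht htA
  -- t is an accumulation point of A
  have hcl : t ∈ closure (A \ {t}) := by
    by_contra hcon
    rw [Metric.mem_closure_iff] at hcon
    push_neg at hcon
    obtain ⟨ε, hε, hball⟩ := hcon
    have hev1 : ∀ᶠ r in 𝓝[>] (0:ℝ),
        (1/2 : ENNReal) < volume (A ∩ Metric.closedBall t r) / volume (Metric.closedBall t r) :=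
      hd.eventually (eventually_gt_nhds (by norm_num))
    have hev2 : ∀ᶠ r in 𝓝[>] (0:ℝ), r < ε :=
      eventually_nhdsWithin_of_eventually_nhds (eventually_lt_nhds hε)
    obtain ⟨r, hr1, hr2, hr3⟩ := (hev1.and (hev2.and self_mem_nhdsWithin)).exists
    have hsub : A ∩ Metric.closedBall t r ⊆ {t} := by
      intro x ⟨hxA, hxb⟩
      by_contra hxt
      have hx' : x ∈ A \ {t} := ⟨hxA, hxt⟩
      have := hball x hx'
      rw [Metric.mem_closedBall, dist_comm] at hxb
      linarith [hr2.le, this, hxb]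
    have hz : volume (A ∩ Metric.closedBall t r) = 0 :=
      le_antisymm (le_trans (measure_mono hsub) (by simp)) zero_le
    rw [hz, ENNReal.zero_div] at hr1
    exact absurd hr1 (by norm_num)
  have hne : (𝓝[A \ {t}] t).NeBot := mem_closure_iff_nhdsWithin_neBot.1 hcl
  have hslope := hasDerivAt_iff_tendsto_slope.1 hv
  have hmono : 𝓝[A \ {t}] t ≤ 𝓝[{t}ᶜ] t :=
    nhdsWithin_mono t (fun x hx => hx.2)
  have hslope' : Tendsto (slope f t) (𝓝[A \ {t}] t) (𝓝 v) := hslope.mono_left hmono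
  have hzero : Tendsto (slope f t) (𝓝[A \ {t}] t) (𝓝 0) := by
    have heq : ∀ x ∈ A \ {t}, slope f t x = 0 := by
      intro x hx
      have hfx : f x = 0 := hx.1
      rw [slope_def_field, hfx, hft]
      simp
    refine Tendsto.congr' ?_ tendsto_const_nhds
    filter_upwards [eventually_mem_nhdsWithin] with x hx
    exact (heq x hx).symm
  exact tendsto_nhds_unique hslope' hzero

lemma lip_ftc (f : ℝ → ℝ) (B : ℝ) (hB : 0 ≤ B)
    (hf : ∀ s t, |f s - f t| ≤ B * |s - t|) (T : ℝ) (hT : 0 < T)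
    (f' : ℝ → ℝ)
    (hf' : ∀ᵐ t ∂(volume.restrict (Set.Ioc 0 T)), HasDerivAt f (f' t) t)
    (hmeas : AEStronglyMeasurable f' (volume.restrict (Set.Ioc 0 T))) :
    ∫ t in Set.Ioc 0 T, f' t = f T - f 0 := by
  have hc : Continuous f := by
    have : LipschitzWith B.toNNReal f := by
      refine LipschitzWith.of_dist_le_mul fun x y => ?_
      rw [Real.dist_eq, Real.dist_eq, Real.coe_toNNReal B hB]
      exact hf x y
    exact this.continuous
  set h : ℕ → ℝ := fun m => T / (m + 1) with hhdef
  have hhpos : ∀ m, 0 < h m := fun m => by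
    apply div_pos hT
    positivity
  have hlim : Tendsto h atTop (𝓝 0) := by
    have h1 : Tendsto (fun m : ℕ => T * (1 / ((m : ℝ) + 1))) atTop (𝓝 (T * 0)) :=
      tendsto_one_div_add_atTop_nhds_zero_nat.const_mul T
    simp only [mul_zero] at h1
    refine h1.congr fun m => ?_
    rw [mul_one_div, hhdef]
  set Fn : ℕ → ℝ → ℝ := fun m t => (f (t + h m) - f t) / h m with hFdef
  have hint : ∀ a b : ℝ, IntervalIntegrable f volume a b := fun a b =>
    hc.intervalIntegrable a b
  have hcshift : ∀ m, Continuous fun t => f (t + h m) := fun m =>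
    hc.comp (continuous_id.add continuous_const)
  -- Step A
  have hstepA : ∀ m, ∫ t in Set.Ioc 0 T, Fn m t
      = (∫ t in T..(T + h m), f t) / h m - (∫ t in (0:ℝ)..(h m), f t) / h m := by
    intro m
    rw [← intervalIntegral.integral_of_le hT.le]
    have e1 : ∫ t in (0:ℝ)..T, Fn m t
        = (∫ t in (0:ℝ)..T, (f (t + h m) - f t)) / h m := by
      simp only [hFdef]
      rw [intervalIntegral.integral_div]
    have e2 : ∫ t in (0:ℝ)..T, (f (t + h m) - f t)
        = (∫ t in (0:ℝ)..T, f (t + h m)) - ∫ t in (0:ℝ)..T, f t :=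
      intervalIntegral.integral_sub ((hcshift m).intervalIntegrable _ _) (hint _ _)
    have e3 : ∫ t in (0:ℝ)..T, f (t + h m) = ∫ t in (h m)..(T + h m), f t := by
      rw [intervalIntegral.integral_comp_add_right f (h m), zero_add]
    have i1 : (∫ t in (h m)..T, f t) + ∫ t in T..(T + h m), f t
        = ∫ t in (h m)..(T + h m), f t :=
      intervalIntegral.integral_add_adjacent_intervals (hint _ _) (hint _ _)
    have i2 : (∫ t in (0:ℝ)..(h m), f t) + ∫ t in (h m)..T, f t
        = ∫ t in (0:ℝ)..T, f t :=
      intervalIntegral.integral_add_adjacent_intervals (hint _ _) (hint _ _)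
    rw [e1, e2, e3, ← sub_div]
    congr 1
    linarith
  -- endpoint limits
  have hend : ∀ a : ℝ, Tendsto (fun m => (∫ t in a..(a + h m), f t) / h m) atTop (𝓝 (f a)) := by
    intro a
    rw [← tendsto_sub_nhds_zero_iff]
    have hbnd : ∀ m, ‖(∫ t in a..(a + h m), f t) / h m - f a‖ ≤ B * h m := by
      intro m
      have hupper : ∀ x ∈ Set.uIoc a (a + h m), ‖f x - f a‖ ≤ B * h m := by
        intro x hx
        rw [Set.uIoc_of_le (by linarith [hhpos m])] at hx
        have : |x - a| ≤ h m := by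
          rw [abs_of_pos (by linarith [hx.1] : 0 < x - a)]
          linarith [hx.2]
        calc ‖f x - f a‖ ≤ B * |x - a| := hf x a
          _ ≤ B * h m := mul_le_mul_of_nonneg_left this hB
      have hint2 : ∫ t in a..(a + h m), (f t - f a)
          = (∫ t in a..(a + h m), f t) - (h m) * f a := by
        rw [intervalIntegral.integral_sub (hint _ _)
          (intervalIntegrable_const)]
        rw [intervalIntegral.integral_const]
        simp [smul_eq_mul]
      have h3 : ‖∫ t in a..(a + h m), (f t - f a)‖ ≤ (B * h m) * |(a + h m) - a| :=
        intervalIntegral.norm_integral_le_of_norm_le_const hupper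
      rw [hint2] at h3
      have h4 : |(a + h m) - a| = h m := by
        rw [show a + h m - a = h m from by ring, abs_of_pos (hhpos m)]
      rw [h4] at h3
      have h5 : (∫ t in a..(a + h m), f t) / h m - f a
          = ((∫ t in a..(a + h m), f t) - h m * f a) / h m := by
        rw [sub_div, mul_div_cancel_left₀ _ (hhpos m).ne']
      rw [h5, norm_div, Real.norm_eq_abs, Real.norm_eq_abs, abs_of_pos (hhpos m),
        div_le_iff₀ (hhpos m)]
      calc |(∫ t in a..(a + h m), f t) - h m * f a| ≤ B * h m * h m := h3
        _ = B * h m * h m := rfl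
    refine squeeze_zero_norm hbnd ?_
    simpa using hlim.const_mul B
  -- dominated convergence
  have hDCT : Tendsto (fun m => ∫ t in Set.Ioc 0 T, Fn m t) atTop
      (𝓝 (∫ t in Set.Ioc 0 T, f' t)) := by
    refine tendsto_integral_of_dominated_convergence (fun _ => B) ?_ ?_ ?_ ?_
    · intro m
      exact (((hcshift m).sub hc).div_const (h m)).aestronglyMeasurable.restrict
    · refine (integrable_const_iff).2 (Or.inr ?_)
      refine ⟨?_⟩
      rw [Measure.restrict_apply_univ, Real.volume_Ioc]
      exact ENNReal.ofReal_lt_top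
    · intro m
      refine Filter.Eventually.of_forall fun t => ?_
      simp only [hFdef]
      rw [norm_div, Real.norm_eq_abs, Real.norm_eq_abs, abs_of_pos (hhpos m),
        div_le_iff₀ (hhpos m)]
      calc |f (t + h m) - f t| ≤ B * |(t + h m) - t| := hf _ _
        _ = B * h m := by rw [show t + h m - t = h m from by ring, abs_of_pos (hhpos m)]
    · filter_upwards [hf'] with t ht
      have hs := hasDerivAt_iff_tendsto_slope.1 ht
      have hseq : Tendsto (fun m => t + h m) atTop (𝓝[≠] t) := by
        refine tendsto_nhdsWithin_of_tendsto_nhds_of_eventually_within _ ?_ ?_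
        · have := tendsto_const_nhds (x := t) (f := atTop (α := ℕ)) |>.add hlim
          simpa using this
        · refine Filter.Eventually.of_forall fun m => ?_
          simp only [Set.mem_compl_iff, Set.mem_singleton_iff]
          intro hcontra
          have := hhpos m
          nlinarith [hcontra]
      have := hs.comp hseq
      refine this.congr fun m => ?_
      simp only [Function.comp_apply, hFdef]
      rw [slope_def_field, add_sub_cancel_left]
  have hlim2 : Tendsto (fun m => ∫ t in Set.Ioc 0 T, Fn m t) atTop (𝓝 (f T - f 0)) := by
    have hT0 : Tendsto (fun m => (∫ t in T..(T + h m), f t) / h m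
        - (∫ t in (0:ℝ)..(0 + h m), f t) / h m) atTop (𝓝 (f T - f 0)) :=
      (hend T).sub (hend 0)
    refine hT0.congr fun m => ?_
    rw [hstepA m, zero_add]
  exact tendsto_nhds_unique hDCT hlim2

end AuxLemmas

open scoped Classical in
/-- The lower bound (41): for `θ*_k = ln(μ_k/ν_k)`, every `T > 0`, every `r ∈ ℝ₊^K` and
every Lipschitz path `q : [0,T] → ℝ₊^K` with `q(0) = 0`, `q(T) = r` and a.e. derivative `q'`,
one has `∫_0^T L(q(t), q'(t)) dt ≥ θ*·r`, the integral being taken in `[0,+∞]`.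
Here `L(x,y) = Σ_J 1_{F_J}(x) L_J(y)` with
`F_J = {x ≥ 0 : x_i = 0 ⇔ i ∈ J}` and `L_J(y) = sup_θ (θ·y − H_J(θ)) ∈ [0,+∞]`,
`H_J(θ) = Σ_k (e^{θ_k}−1)λ_k + Σ_{k∈J} h_k(θ)⁺ μ_k + Σ_{k∉J} h_k(θ) μ_k`. -/
theorem stmt_14 {K : ℕ} (P : Matrix (Fin (K + 1)) (Fin (K + 1)) ℝ)
    (hP : ∀ k l, 0 ≤ P k l) (hProw : ∀ k, ∑ l, P k l ≤ 1)
    (hspec : ∀ z ∈ spectrum ℂ (P.map Complex.ofReal), ‖z‖ < 1)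
    (lam mu : Fin (K + 1) → ℝ) (hlam : ∀ k, 0 < lam k) (hmu : ∀ k, 0 < mu k)
    (ν : Fin (K + 1) → ℝ)
    (hν : ν = ((1 : Matrix (Fin (K + 1)) (Fin (K + 1)) ℝ) - Pᵀ)⁻¹ *ᵥ lam)
    (hνpos : ∀ k, 0 < ν k)
    (θstar : Fin (K + 1) → ℝ) (hθ : ∀ k, θstar k = Real.log (mu k / ν k))
    (T : ℝ) (hT : 0 < T) (r : Fin (K + 1) → ℝ) (hr : ∀ k, 0 ≤ r k)
    (q : ℝ → Fin (K + 1) → ℝ) (C : NNReal) (hLip : LipschitzWith C q)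
    (hq0 : q 0 = 0) (hqT : q T = r)
    (hqnonneg : ∀ t ∈ Set.Icc (0 : ℝ) T, ∀ k, 0 ≤ q t k)
    (q' : ℝ → Fin (K + 1) → ℝ)
    (hq' : ∀ᵐ t ∂(volume.restrict (Set.Ioc (0 : ℝ) T)), HasDerivAt q (q' t) t) :
    ENNReal.ofReal (∑ k, θstar k * r k)
      ≤ ∫⁻ t in Set.Ioc (0 : ℝ) T,
          ∑ J : Finset (Fin (K + 1)),
            (if (∀ i ∈ J, q t i = 0) ∧ (∀ i ∉ J, 0 < q t i) then
              ⨆ θ : Fin (K + 1) → ℝ,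
                ENNReal.ofReal
                  (∑ k, θ k * q' t k
                    - (∑ k, (Real.exp (θ k) - 1) * lam k
                      + ∑ k ∈ J,
                          max (Real.exp (-θ k) * ((∑ l, (Real.exp (θ l) - 1) * P k l) + 1) - 1) 0
                            * mu k
                      + ∑ k ∈ Jᶜ,
                          (Real.exp (-θ k) * ((∑ l, (Real.exp (θ l) - 1) * P k l) + 1) - 1)
                            * mu k))
            else 0) := by
  -- balance equation
  have hbal : ∀ l, ν l = lam l + ∑ k, P k l * ν k := by
    by_cases hdet : IsUnit ((1 : Matrix (Fin (K + 1)) (Fin (K + 1)) ℝ) - Pᵀ).det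
    · have hmul : ((1 : Matrix (Fin (K + 1)) (Fin (K + 1)) ℝ) - Pᵀ) *ᵥ ν = lam := by
        rw [hν, Matrix.mulVec_mulVec, Matrix.mul_nonsing_inv _ hdet, Matrix.one_mulVec]
      intro l
      have h1 := congrFun hmul l
      rw [Matrix.sub_mulVec, Matrix.one_mulVec] at h1
      simp only [Pi.sub_apply] at h1
      have h2 : (Pᵀ *ᵥ ν) l = ∑ k, P k l * ν k := by
        simp [Matrix.mulVec, dotProduct, Matrix.transpose_apply]
      rw [h2] at h1
      linarith
    · exfalso
      rw [Matrix.nonsing_inv_apply_not_isUnit _ hdet, Matrix.zero_mulVec] at hν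
      have := hνpos 0
      rw [hν] at this
      exact lt_irrefl _ this
  -- the vectors β J
  have hbeta := fun J => exists_beta P hP hProw lam ν mu hlam hνpos hmu hbal J
  choose βf hβ1 hβ2 hβ3 using hbeta
  -- derivative coordinates
  have hqc : Continuous q := hLip.continuous
  have hqck : ∀ k, Continuous fun t => q t k := fun k => (continuous_apply k).comp hqc
  have hcoord : ∀ᵐ t ∂(volume.restrict (Set.Ioc (0 : ℝ) T)), ∀ k, HasDerivAt (fun s => q s k) (q' t k) t := by
    filter_upwards [hq'] with t ht k
    exact (ContinuousLinearMap.proj k).hasFDerivAt.comp_hasDerivAt t ht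
  -- a.e. zero derivative on zero set
  have hzero : ∀ᵐ t ∂(volume.restrict (Set.Ioc (0 : ℝ) T)), ∀ k, q t k = 0 → q' t k = 0 := by
    have h1 : ∀ᵐ t ∂(volume.restrict (Set.Ioc (0 : ℝ) T)), ∀ k, ∀ v : ℝ, HasDerivAt (fun s => q s k) v t → q t k = 0 → v = 0 := by
      rw [ae_all_iff]
      intro k
      exact ae_restrict_of_ae (deriv_zero_on_zeros (fun t => q t k) (hqck k))
    filter_upwards [h1, hcoord] with t ht hct k hk
    exact ht k (q' t k) (hct k) hk
  -- derivative bound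
  have hq'bd : ∀ᵐ t ∂(volume.restrict (Set.Ioc (0 : ℝ) T)), ‖q' t‖ ≤ C := by
    filter_upwards [hq'] with t ht
    have hs := hasDerivAt_iff_tendsto_slope.1 ht
    have hb : ∀ᶠ s in 𝓝[≠] t, ‖slope q t s‖ ≤ (C : ℝ) := by
      refine eventually_mem_nhdsWithin.mono fun s hs' => ?_
      have hne : s ≠ t := hs'
      have : slope q t s = (s - t)⁻¹ • (q s - q t) := rfl
      rw [this, norm_smul, norm_inv, Real.norm_eq_abs]
      have hd : ‖q s - q t‖ ≤ (C : ℝ) * |s - t| := by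
        have := hLip.dist_le_mul s t
        rw [dist_eq_norm, Real.dist_eq] at this
        exact this
      have habs : (0:ℝ) < |s - t| := abs_pos.2 (sub_ne_zero.2 hne)
      calc |s - t|⁻¹ * ‖q s - q t‖ ≤ |s - t|⁻¹ * ((C : ℝ) * |s - t|) :=
            mul_le_mul_of_nonneg_left hd (inv_nonneg.2 (abs_nonneg _))
        _ = C := by
            rw [mul_comm (C : ℝ) _, ← mul_assoc, inv_mul_cancel₀ habs.ne', one_mul]
    exact le_of_tendsto hs.norm hb
  -- the function g
  set g : ℝ → ℝ := fun t => ∑ k, θstar k * q' t k with hg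
  set B : ℝ := (∑ k, |θstar k|) * C with hB
  have hB0 : (0:ℝ) ≤ B :=
    mul_nonneg (Finset.sum_nonneg fun k _ => abs_nonneg _) C.coe_nonneg
  have hcoordLip : ∀ k (s t' : ℝ), |q s k - q t' k| ≤ (C:ℝ) * |s - t'| := by
    intro k s t'
    have h1 : dist (q s k) (q t' k) ≤ dist (q s) (q t') := dist_le_pi_dist (q s) (q t') k
    have h2 := hLip.dist_le_mul s t'
    calc |q s k - q t' k| = dist (q s k) (q t' k) := (Real.dist_eq _ _).symm
      _ ≤ dist (q s) (q t') := h1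
      _ ≤ C * dist s t' := h2
      _ = C * |s - t'| := by rw [Real.dist_eq]
  have hFlip : ∀ s t', |(∑ k, θstar k * q s k) - ∑ k, θstar k * q t' k| ≤ B * |s - t'| := by
    intro s t'
    have h1 : (∑ k, θstar k * q s k) - ∑ k, θstar k * q t' k
        = ∑ k, θstar k * (q s k - q t' k) := by
      rw [← Finset.sum_sub_distrib]
      exact Finset.sum_congr rfl fun k _ => by ring
    rw [h1]
    calc |∑ k, θstar k * (q s k - q t' k)| ≤ ∑ k, |θstar k * (q s k - q t' k)| :=
          Finset.abs_sum_le_sum_abs _ _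
      _ ≤ ∑ k, |θstar k| * ((C:ℝ) * |s - t'|) := by
          refine Finset.sum_le_sum fun k _ => ?_
          rw [abs_mul]
          exact mul_le_mul_of_nonneg_left (hcoordLip k s t') (abs_nonneg _)
      _ = B * |s - t'| := by rw [hB, ← Finset.sum_mul, mul_assoc]
  have hgd : ∀ᵐ t ∂(volume.restrict (Set.Ioc (0 : ℝ) T)), HasDerivAt (fun s => ∑ k, θstar k * q s k) (g t) t := by
    filter_upwards [hcoord] with t ht
    have := HasDerivAt.fun_sum (fun k (_ : k ∈ Finset.univ) => (ht k).const_mul (θstar k))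
    simpa using this
  have hgmeas : AEStronglyMeasurable g (volume.restrict (Set.Ioc (0 : ℝ) T)) := by
    have hd : StronglyMeasurable (fun t => ∑ k, θstar k * deriv q t k) := by
      apply Measurable.stronglyMeasurable
      exact Finset.measurable_sum _
        (fun k _ => ((measurable_pi_apply k).comp (measurable_deriv q)).const_mul _)
    refine hd.aestronglyMeasurable.congr ?_
    filter_upwards [hq'] with t ht
    have hde : deriv q t = q' t := ht.deriv
    simp only [hg, hde]
  have hgbd : ∀ᵐ t ∂(volume.restrict (Set.Ioc (0 : ℝ) T)), ‖g t‖ ≤ B := by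
    filter_upwards [hq'bd] with t ht
    calc ‖g t‖ = |∑ k, θstar k * q' t k| := rfl
      _ ≤ ∑ k, |θstar k * q' t k| := Finset.abs_sum_le_sum_abs _ _
      _ ≤ ∑ k, |θstar k| * C := by
          refine Finset.sum_le_sum fun k _ => ?_
          rw [abs_mul]
          refine mul_le_mul_of_nonneg_left ?_ (abs_nonneg _)
          calc |q' t k| ≤ ‖q' t‖ := norm_le_pi_norm (q' t) k
            _ ≤ C := ht
      _ = B := by rw [hB, Finset.sum_mul]
  have hgint : Integrable g (volume.restrict (Set.Ioc (0 : ℝ) T)) := by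
    refine Integrable.mono' ?_ hgmeas hgbd
    refine (integrable_const_iff).2 (Or.inr ?_)
    refine ⟨?_⟩
    rw [Measure.restrict_apply_univ, Real.volume_Ioc]
    exact ENNReal.ofReal_lt_top
  have hFTC : ∫ t in Set.Ioc (0:ℝ) T, g t = ∑ k, θstar k * r k := by
    have hftc := lip_ftc (fun s => ∑ k, θstar k * q s k) B hB0 hFlip T hT g
      hgd hgmeas
    rw [hftc]
    simp only [hqT, hq0, Pi.zero_apply, mul_zero, Finset.sum_const_zero, sub_zero]
  -- pointwise lower bound of the integrand
  have hHzero : ∀ J : Finset (Fin (K+1)),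
      (∑ k, (Real.exp (Real.log (1 + βf J k)) - 1) * lam k
        + ∑ k ∈ J,
            max (Real.exp (-Real.log (1 + βf J k))
              * ((∑ l, (Real.exp (Real.log (1 + βf J l)) - 1) * P k l) + 1) - 1) 0 * mu k
        + ∑ k ∈ Jᶜ,
            (Real.exp (-Real.log (1 + βf J k))
              * ((∑ l, (Real.exp (Real.log (1 + βf J l)) - 1) * P k l) + 1) - 1) * mu k) = 0 :=
    fun J => HJ_zero P lam mu ν hmu hνpos hbal J (βf J) (hβ1 J) (hβ2 J) (hβ3 J)
  have hmain : ∀ᵐ t ∂(volume.restrict (Set.Ioc (0 : ℝ) T)), ENNReal.ofReal (g t)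
      ≤ ∑ J : Finset (Fin (K + 1)),
          (if (∀ i ∈ J, q t i = 0) ∧ (∀ i ∉ J, 0 < q t i) then
            ⨆ θ : Fin (K + 1) → ℝ,
              ENNReal.ofReal
                (∑ k, θ k * q' t k
                  - (∑ k, (Real.exp (θ k) - 1) * lam k
                    + ∑ k ∈ J,
                        max (Real.exp (-θ k) * ((∑ l, (Real.exp (θ l) - 1) * P k l) + 1) - 1) 0
                          * mu k
                    + ∑ k ∈ Jᶜ,
                        (Real.exp (-θ k) * ((∑ l, (Real.exp (θ l) - 1) * P k l) + 1) - 1)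
                          * mu k))
          else 0) := by
    filter_upwards [hzero, ae_restrict_mem measurableSet_Ioc] with t hzt htmem
    set Jt : Finset (Fin (K+1)) := Finset.filter (fun i => q t i = 0) Finset.univ with hJt
    have hcond : (∀ i ∈ Jt, q t i = 0) ∧ (∀ i ∉ Jt, 0 < q t i) := by
      constructor
      · intro i hi
        exact (Finset.mem_filter.1 hi).2
      · intro i hi
        have hpos : 0 ≤ q t i := hqnonneg t ⟨htmem.1.le, htmem.2⟩ i
        rcases lt_or_eq_of_le hpos with h | h
        · exact h
        · exact absurd (Finset.mem_filter.2 ⟨Finset.mem_univ i, h.symm⟩) hi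
    have hJzero : ∀ k ∈ Jt, q' t k = 0 := fun k hk => hzt k (Finset.mem_filter.1 hk).2
    have hstep : ENNReal.ofReal (g t) ≤
        (if (∀ i ∈ Jt, q t i = 0) ∧ (∀ i ∉ Jt, 0 < q t i) then
          ⨆ θ : Fin (K + 1) → ℝ,
            ENNReal.ofReal
              (∑ k, θ k * q' t k
                - (∑ k, (Real.exp (θ k) - 1) * lam k
                  + ∑ k ∈ Jt,
                      max (Real.exp (-θ k) * ((∑ l, (Real.exp (θ l) - 1) * P k l) + 1) - 1) 0
                        * mu k
                  + ∑ k ∈ Jtᶜ,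
                      (Real.exp (-θ k) * ((∑ l, (Real.exp (θ l) - 1) * P k l) + 1) - 1)
                        * mu k))
        else 0) := by
      rw [if_pos hcond]
      refine le_trans (le_of_eq ?_) (le_iSup _ (fun k => Real.log (1 + βf Jt k)))
      show ENNReal.ofReal (g t)
        = ENNReal.ofReal
          (∑ k, Real.log (1 + βf Jt k) * q' t k
            - (∑ k, (Real.exp (Real.log (1 + βf Jt k)) - 1) * lam k
              + ∑ k ∈ Jt,
                  max (Real.exp (-Real.log (1 + βf Jt k))
                    * ((∑ l, (Real.exp (Real.log (1 + βf Jt l)) - 1) * P k l) + 1) - 1) 0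
                    * mu k
              + ∑ k ∈ Jtᶜ,
                  (Real.exp (-Real.log (1 + βf Jt k))
                    * ((∑ l, (Real.exp (Real.log (1 + βf Jt l)) - 1) * P k l) + 1) - 1)
                    * mu k))
      rw [hHzero Jt, sub_zero]
      congr 1
      rw [hg]
      refine (Finset.sum_congr rfl fun k _ => ?_).symm
      by_cases hk : k ∈ Jt
      · rw [hJzero k hk, mul_zero, mul_zero]
      · have hoff := hβ2 Jt k hk
        have heq : Real.log (1 + βf Jt k) = θstar k := by
          rw [hθ k, hoff]
          congr 1
          ring
        rw [heq]
    refine le_trans hstep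
      (Finset.single_le_sum (f := fun J : Finset (Fin (K+1)) =>
        (if (∀ i ∈ J, q t i = 0) ∧ (∀ i ∉ J, 0 < q t i) then
          ⨆ θ : Fin (K + 1) → ℝ,
            ENNReal.ofReal
              (∑ k, θ k * q' t k
                - (∑ k, (Real.exp (θ k) - 1) * lam k
                  + ∑ k ∈ J,
                      max (Real.exp (-θ k) * ((∑ l, (Real.exp (θ l) - 1) * P k l) + 1) - 1) 0
                        * mu k
                  + ∑ k ∈ Jᶜ,
                      (Real.exp (-θ k) * ((∑ l, (Real.exp (θ l) - 1) * P k l) + 1) - 1)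
                        * mu k))
        else 0)) (fun _ _ => zero_le) (Finset.mem_univ Jt))
  -- put everything together
  calc ENNReal.ofReal (∑ k, θstar k * r k)
      = ENNReal.ofReal (∫ t in Set.Ioc (0:ℝ) T, g t) := by rw [hFTC]
    _ ≤ ∫⁻ t in Set.Ioc (0:ℝ) T, ENNReal.ofReal (g t) := by
        have hmax : Integrable (fun t => max (g t) 0) (volume.restrict (Set.Ioc (0 : ℝ) T)) := hgint.pos_part
        calc ENNReal.ofReal (∫ t in Set.Ioc (0:ℝ) T, g t)
            ≤ ENNReal.ofReal (∫ t in Set.Ioc (0:ℝ) T, max (g t) 0) := by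
              refine ENNReal.ofReal_le_ofReal ?_
              exact integral_mono hgint hmax fun t => le_max_left _ _
          _ = ∫⁻ t in Set.Ioc (0:ℝ) T, ENNReal.ofReal (max (g t) 0) :=
              ofReal_integral_eq_lintegral_ofReal hmax
                (Filter.Eventually.of_forall fun t => le_max_right _ _)
          _ = ∫⁻ t in Set.Ioc (0:ℝ) T, ENNReal.ofReal (g t) := by
              refine lintegral_congr fun t => ?_
              rcases le_total (g t) 0 with h | h
              · rw [max_eq_right h, ENNReal.ofReal_of_nonpos h, ENNReal.ofReal_zero]
              · rw [max_eq_left h]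
    _ ≤ _ := by
        exact lintegral_mono_ae hmain
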